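/- (Closed-form solution of the graph reconstruction objective.) Let H ∈ ℝ^{n×d}, H₀ ∈ ℝ^{n×d}, Â_k ∈ ℝ^{n×n} for k=1..K, scalars γ ∈ [0,1), β₁,β₂ > 0, λ_k ∈ ℝ. The minimizer over Z ∈ ℝ^{n×n} of ‖H - (1-γ)ZH - γH₀‖_F² + β₁‖Z‖_F² + β₂‖Z - Σ_k λ_kÂ^k‖_F² is Z* = [(1-γ)HHᵀ + β₂Σ_kλ_kÂ^k - γ(1-γ)H₀Hᵀ]·[(1-γ)²HHᵀ + (β₁+β₂)I_n]⁻¹. -/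

import Mathlib

open Matrix Finset

namespace RCFaux

noncomputable def ip {m k : ℕ} (X Y : Matrix (Fin m) (Fin k) ℝ) : ℝ :=
  ∑ i, ∑ j, X i j * Y i j

lemma ip_comm {m k : ℕ} (X Y : Matrix (Fin m) (Fin k) ℝ) : ip X Y = ip Y X := by
  simp [ip, mul_comm]

lemma ip_add_left {m k : ℕ} (X Y Z : Matrix (Fin m) (Fin k) ℝ) :
    ip (X + Y) Z = ip X Z + ip Y Z := by
  simp [ip, add_mul, Finset.sum_add_distrib]

lemma ip_smul_left {m k : ℕ} (c : ℝ) (X Z : Matrix (Fin m) (Fin k) ℝ) :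
    ip (c • X) Z = c * ip X Z := by
  simp [ip, Finset.mul_sum, mul_assoc]

lemma ip_zero_left {m k : ℕ} (Z : Matrix (Fin m) (Fin k) ℝ) : ip 0 Z = 0 := by
  simp [ip]

lemma ip_add_right {m k : ℕ} (X Y Z : Matrix (Fin m) (Fin k) ℝ) :
    ip X (Y + Z) = ip X Y + ip X Z := by
  rw [ip_comm, ip_add_left, ip_comm Y X, ip_comm Z X]

lemma ip_smul_right {m k : ℕ} (c : ℝ) (X Z : Matrix (Fin m) (Fin k) ℝ) :
    ip X (c • Z) = c * ip X Z := by
  rw [ip_comm, ip_smul_left, ip_comm Z X]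

lemma ip_quad {m k : ℕ} (A B : Matrix (Fin m) (Fin k) ℝ) (c : ℝ) :
    ip (A + c • B) (A + c • B) = ip A A + 2 * c * ip A B + c ^ 2 * ip B B := by
  simp only [ip_add_left, ip_add_right, ip_smul_left, ip_smul_right, ip_comm B A]
  ring

lemma ip_self_nonneg {m k : ℕ} (X : Matrix (Fin m) (Fin k) ℝ) : 0 ≤ ip X X :=
  Finset.sum_nonneg fun _ _ => Finset.sum_nonneg fun _ _ => mul_self_nonneg _

lemma ip_self_pos {m k : ℕ} {X : Matrix (Fin m) (Fin k) ℝ} (h : X ≠ 0) : 0 < ip X X := by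
  rcases (ip_self_nonneg X).lt_or_eq with h' | h'
  · exact h'
  exfalso; apply h
  ext i j
  have h1 := (Finset.sum_eq_zero_iff_of_nonneg (fun i _ =>
    Finset.sum_nonneg fun j _ => mul_self_nonneg (X i j))).mp h'.symm i (Finset.mem_univ i)
  have h2 := (Finset.sum_eq_zero_iff_of_nonneg (fun j _ =>
    mul_self_nonneg (X i j))).mp h1 j (Finset.mem_univ j)
  simpa [mul_self_eq_zero] using h2

lemma ip_mul_right {m k : ℕ} (X : Matrix (Fin m) (Fin k) ℝ)
    (D : Matrix (Fin m) (Fin m) ℝ) (Hm : Matrix (Fin m) (Fin k) ℝ) :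
    ip X (D * Hm) = ip (X * Hmᵀ) D := by
  simp only [ip, mul_apply, transpose_apply, Finset.mul_sum, Finset.sum_mul]
  refine Finset.sum_congr rfl fun i _ => ?_
  rw [Finset.sum_comm]
  exact Finset.sum_congr rfl fun a _ => Finset.sum_congr rfl fun b _ => by ring

end RCFaux

open RCFaux

/-- closed-form solution of the graph reconstruction objective.
With Frobenius-norm-squared written as the sum of squared entries, the objective
`‖H - (1-γ)ZH - γH₀‖_F² + β₁‖Z‖_F² + β₂‖Z - Σ_{k=1}^K λ_k Â^k‖_F²` is uniquely
minimized at `Z* = [(1-γ)HHᵀ + β₂Σ_kλ_kÂ^k - γ(1-γ)H₀Hᵀ]·[(1-γ)²HHᵀ + (β₁+β₂)Iₙ]⁻¹`. -/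
theorem reconstruction_closed_form {n d K : ℕ} (H H₀ : Matrix (Fin n) (Fin d) ℝ)
    (A : Matrix (Fin n) (Fin n) ℝ) (γ β₁ β₂ : ℝ) (lam : ℕ → ℝ)
    (hγ : γ ∈ Set.Ico (0 : ℝ) 1) (hβ₁ : 0 < β₁) (hβ₂ : 0 < β₂) :
    let M : Matrix (Fin n) (Fin n) ℝ := ∑ k ∈ Finset.Icc 1 K, lam k • A ^ k
    let G : Matrix (Fin n) (Fin n) ℝ → ℝ := fun Z =>
      (∑ i, ∑ j, ((H - (1 - γ) • (Z * H) - γ • H₀) i j) ^ 2) +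
        β₁ * (∑ i, ∑ j, (Z i j) ^ 2) + β₂ * (∑ i, ∑ j, ((Z - M) i j) ^ 2)
    let Zstar : Matrix (Fin n) (Fin n) ℝ :=
      ((1 - γ) • (H * Hᵀ) + β₂ • M - (γ * (1 - γ)) • (H₀ * Hᵀ)) *
        ((1 - γ) ^ 2 • (H * Hᵀ) + (β₁ + β₂) • (1 : Matrix (Fin n) (Fin n) ℝ))⁻¹
    ∀ Z : Matrix (Fin n) (Fin n) ℝ, Z ≠ Zstar → G Zstar < G Z := by
  intro M G Zstar Z hZ
  obtain ⟨hγ0, hγ1⟩ := hγ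
  set P : Matrix (Fin n) (Fin n) ℝ :=
    (1 - γ) ^ 2 • (H * Hᵀ) + (β₁ + β₂) • (1 : Matrix (Fin n) (Fin n) ℝ) with hP
  set Q : Matrix (Fin n) (Fin n) ℝ :=
    (1 - γ) • (H * Hᵀ) + β₂ • M - (γ * (1 - γ)) • (H₀ * Hᵀ) with hQ
  have hZdef : Zstar = Q * P⁻¹ := rfl
  -- P is positive definite, hence invertible
  have hPsd : ((1 - γ) ^ 2 • (H * Hᵀ)).PosSemidef := by
    have h : (1 - γ) ^ 2 • (H * Hᵀ) = ((1 - γ) • H) * ((1 - γ) • H)ᴴ := by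
      rw [conjTranspose_eq_transpose_of_trivial, transpose_smul, Matrix.smul_mul,
        Matrix.mul_smul, smul_smul, ← sq]
    rw [h]
    exact posSemidef_self_mul_conjTranspose _
  have hPd : P.PosDef := by
    rw [hP]
    apply Matrix.PosDef.posSemidef_add hPsd
    have h1 : ((β₁ + β₂) • (1 : Matrix (Fin n) (Fin n) ℝ)) =
        diagonal (fun _ => β₁ + β₂) := by
      ext i j
      by_cases h : i = j <;> simp [h, Matrix.one_apply, diagonal]
    rw [h1]
    exact PosDef.diagonal (fun _ => by linarith)
  have hZP : Zstar * P = Q := by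
    have hinv := Matrix.nonsing_inv_mul P (isUnit_iff_isUnit_det _ |>.mp hPd.isUnit)
    rw [hZdef, mul_assoc, hinv, mul_one]
  -- abbreviations
  set D : Matrix (Fin n) (Fin n) ℝ := Z - Zstar with hD
  have hDne : D ≠ 0 := sub_ne_zero.mpr hZ
  set E : Matrix (Fin n) (Fin d) ℝ := H - (1 - γ) • (Zstar * H) - γ • H₀ with hE
  -- G via ip
  have hGip : ∀ W : Matrix (Fin n) (Fin n) ℝ,
      G W = ip (H - (1 - γ) • (W * H) - γ • H₀) (H - (1 - γ) • (W * H) - γ • H₀)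
        + β₁ * ip W W + β₂ * ip (W - M) (W - M) := by
    intro W
    simp [G, ip, pow_two]
  -- decompositions
  have hsplit1 : H - (1 - γ) • (Z * H) - γ • H₀ = E + (-(1 - γ)) • (D * H) := by
    rw [hE, hD, Matrix.sub_mul]
    module
  have hsplit2 : Z = Zstar + (1 : ℝ) • D := by rw [hD]; module
  have hsplit3 : Z - M = (Zstar - M) + (1 : ℝ) • D := by rw [hD]; module
  -- stationarity: the gradient-matrix vanishes
  have hEH : E * Hᵀ = H * Hᵀ - (1 - γ) • (Zstar * (H * Hᵀ)) - γ • (H₀ * Hᵀ) := by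
    rw [hE, Matrix.sub_mul, Matrix.sub_mul, Matrix.smul_mul, Matrix.smul_mul, Matrix.mul_assoc]
  have hZPQ : (1 - γ) ^ 2 • (Zstar * (H * Hᵀ)) + (β₁ + β₂) • Zstar = Q := by
    rw [← hZP, hP, Matrix.mul_add, Matrix.mul_smul, Matrix.mul_smul, Matrix.mul_one]
  have hN : β₁ • Zstar + β₂ • (Zstar - M) + (-(1 - γ)) • (E * Hᵀ) = 0 := by
    rw [hEH]
    rw [hQ] at hZPQ
    linear_combination (norm := module) hZPQ
  -- expansion of the objective
  have hGZs : G Zstar = ip E E + β₁ * ip Zstar Zstar + β₂ * ip (Zstar - M) (Zstar - M) := by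
    rw [hGip Zstar, ← hE]
  have hGZ : G Z = ip E E + β₁ * ip Zstar Zstar + β₂ * ip (Zstar - M) (Zstar - M)
      + ((1 - γ) ^ 2 * ip (D * H) (D * H) + (β₁ + β₂) * ip D D)
      + 2 * ip (β₁ • Zstar + β₂ • (Zstar - M) + (-(1 - γ)) • (E * Hᵀ)) D := by
    rw [hGip Z, hsplit1, hsplit3, hsplit2]
    rw [ip_quad, ip_quad, ip_quad, ip_mul_right E D H,
      ip_add_left, ip_add_left, ip_smul_left, ip_smul_left, ip_smul_left]
    ring
  rw [hGZs, hGZ, hN, ip_zero_left]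
  have h1 : 0 ≤ (1 - γ) ^ 2 * ip (D * H) (D * H) :=
    mul_nonneg (sq_nonneg _) (ip_self_nonneg _)
  have h2 : 0 < (β₁ + β₂) * ip D D := mul_pos (by linarith) (ip_self_pos hDne)
  linarith
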